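/- arXiv:1011.5284 — 2 statements merged into one kernel-verified Lean document; each statement's English description precedes it below -/
import Mathlib

section
/- Let W be a reflexive Banach space whose norm is locally uniformly convex, and H a C¹ functional on W satisfying ⟨H'(u) - H'(v), u - v⟩ ≥ (‖u‖^{p-1} - ‖v‖^{p-1})(‖u‖ - ‖v‖) for all u, v. If u_n ⇀ u weakly in W and ⟨H'(u_n), u_n - u⟩ → 0, then u_n → u strongly in W. -/
open Filter

/-- A normed space is locally uniformly convex. -/
def IsLocallyUniformlyConvex (W : Type*) [NormedAddCommGroup W] : Prop :=
  ∀ x : W, ‖x‖ = 1 → ∀ ε > 0, ∃ δ > 0, ∀ y : W, ‖y‖ = 1 → 2 - δ < ‖x + y‖ → ‖x - y‖ < ε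

/-- A real normed space is reflexive: every element of the bidual is evaluation at a point. -/
def IsReflexiveSpace (W : Type*) [NormedAddCommGroup W] [NormedSpace ℝ W] : Prop :=
  ∀ Φ : (W →L[ℝ] ℝ) →L[ℝ] ℝ, ∃ x : W, ∀ f : W →L[ℝ] ℝ, Φ f = f x

lemma aux_rpow_gap (p b : ℝ) (hp : 1 < p) (hb : 0 ≤ b) (ε : ℝ) (hε : 0 < ε) :
    ∃ c > 0, ∀ a : ℝ, 0 ≤ a → (a ^ (p - 1) - b ^ (p - 1)) * (a - b) < c → |a - b| < ε := by
  have hq : 0 < p - 1 := by linarith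
  have hc₁ : 0 < ((b + ε) ^ (p - 1) - b ^ (p - 1)) * ε :=
    mul_pos (sub_pos.mpr (Real.rpow_lt_rpow hb (by linarith) hq)) hε
  by_cases hbε : ε ≤ b
  · have hbe : 0 ≤ b - ε := by linarith
    have hc₂ : 0 < (b ^ (p - 1) - (b - ε) ^ (p - 1)) * ε :=
      mul_pos (sub_pos.mpr (Real.rpow_lt_rpow hbe (by linarith) hq)) hε
    refine ⟨min (((b + ε) ^ (p - 1) - b ^ (p - 1)) * ε)
      ((b ^ (p - 1) - (b - ε) ^ (p - 1)) * ε), lt_min hc₁ hc₂, fun a ha hlt => ?_⟩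
    rw [abs_lt]
    constructor
    · by_contra hcon
      push_neg at hcon
      have h1 : a ≤ b - ε := by linarith
      have h2 : (b ^ (p - 1) - (b - ε) ^ (p - 1)) * ε ≤
          (a ^ (p - 1) - b ^ (p - 1)) * (a - b) := by
        have hr : a ^ (p - 1) ≤ (b - ε) ^ (p - 1) := Real.rpow_le_rpow ha h1 hq.le
        have : (a ^ (p - 1) - b ^ (p - 1)) * (a - b)
            = (b ^ (p - 1) - a ^ (p - 1)) * (b - a) := by ring
        rw [this]
        apply mul_le_mul (by linarith) (by linarith) hε.le
        have : (b - ε) ^ (p - 1) ≤ b ^ (p - 1) := Real.rpow_le_rpow hbe (by linarith) hq.le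
        linarith
      have := lt_of_le_of_lt h2 hlt
      exact absurd this (not_lt.mpr (min_le_right _ _))
    · by_contra hcon
      push_neg at hcon
      have h1 : b + ε ≤ a := by linarith
      have h2 : ((b + ε) ^ (p - 1) - b ^ (p - 1)) * ε ≤
          (a ^ (p - 1) - b ^ (p - 1)) * (a - b) := by
        have hr : (b + ε) ^ (p - 1) ≤ a ^ (p - 1) :=
          Real.rpow_le_rpow (by linarith) h1 hq.le
        apply mul_le_mul (by linarith) (by linarith) hε.le
        have : b ^ (p - 1) ≤ a ^ (p - 1) := Real.rpow_le_rpow hb (by linarith) hq.le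
        linarith
      have := lt_of_le_of_lt h2 hlt
      exact absurd this (not_lt.mpr (min_le_left _ _))
  · push_neg at hbε
    refine ⟨((b + ε) ^ (p - 1) - b ^ (p - 1)) * ε, hc₁, fun a ha hlt => ?_⟩
    rw [abs_lt]
    refine ⟨by linarith, ?_⟩
    by_contra hcon
    push_neg at hcon
    have h1 : b + ε ≤ a := by linarith
    have h2 : ((b + ε) ^ (p - 1) - b ^ (p - 1)) * ε ≤
        (a ^ (p - 1) - b ^ (p - 1)) * (a - b) := by
      have hr : (b + ε) ^ (p - 1) ≤ a ^ (p - 1) :=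
        Real.rpow_le_rpow (by linarith) h1 hq.le
      apply mul_le_mul (by linarith) (by linarith) hε.le
      have : b ^ (p - 1) ≤ a ^ (p - 1) := Real.rpow_le_rpow hb (by linarith) hq.le
      linarith
    linarith

/-- If `W` is a reflexive Banach space with locally uniformly convex norm, `H` is a `C¹`
functional with `⟨H'(u)-H'(v), u-v⟩ ≥ (‖u‖^{p-1}-‖v‖^{p-1})(‖u‖-‖v‖)`, `u_n ⇀ u` weakly and
`⟨H'(u_n), u_n - u⟩ → 0`, then `u_n → u` strongly. -/
theorem stmt_5 {W : Type*} [NormedAddCommGroup W] [NormedSpace ℝ W] [CompleteSpace W]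
    (hrefl : IsReflexiveSpace W) (hluc : IsLocallyUniformlyConvex W)
    (p : ℝ) (hp : 1 < p)
    (H : W → ℝ) (H' : W → W →L[ℝ] ℝ)
    (hH : ∀ u, HasFDerivAt H (H' u) u) (hH' : Continuous H')
    (hmono : ∀ u v : W,
      (‖u‖ ^ (p - 1) - ‖v‖ ^ (p - 1)) * (‖u‖ - ‖v‖) ≤ (H' u - H' v) (u - v))
    (un : ℕ → W) (u : W)
    (hweak : ∀ f : W →L[ℝ] ℝ, Tendsto (fun n => f (un n)) atTop (nhds (f u)))
    (hpair : Tendsto (fun n => (H' (un n)) (un n - u)) atTop (nhds 0)) :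
    Tendsto un atTop (nhds u) := by
  have hq : 0 < p - 1 := by linarith
  -- Step 1: (H' u)(un n - u) → 0
  have h2 : Tendsto (fun n => (H' u) (un n - u)) atTop (nhds 0) := by
    have := (hweak (H' u)).sub_const ((H' u) u)
    simpa [map_sub] using this
  -- Step 2: squeeze
  set g : ℕ → ℝ := fun n =>
    (‖un n‖ ^ (p - 1) - ‖u‖ ^ (p - 1)) * (‖un n‖ - ‖u‖) with hg
  have hg0 : ∀ n, 0 ≤ g n := by
    intro n
    simp only [hg]
    rcases le_total ‖un n‖ ‖u‖ with h | h
    · have : ‖un n‖ ^ (p - 1) ≤ ‖u‖ ^ (p - 1) :=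
        Real.rpow_le_rpow (norm_nonneg _) h hq.le
      nlinarith [mul_nonneg (sub_nonneg.mpr this) (sub_nonneg.mpr h)]
    · have : ‖u‖ ^ (p - 1) ≤ ‖un n‖ ^ (p - 1) :=
        Real.rpow_le_rpow (norm_nonneg _) h hq.le
      exact mul_nonneg (by linarith) (by linarith)
  have hgle : ∀ n, g n ≤ (H' (un n)) (un n - u) - (H' u) (un n - u) := by
    intro n
    have := hmono (un n) u
    simpa [ContinuousLinearMap.sub_apply] using this
  have hD : Tendsto (fun n => (H' (un n)) (un n - u) - (H' u) (un n - u)) atTop (nhds 0) := by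
    simpa using hpair.sub h2
  have hgtend : Tendsto g atTop (nhds 0) :=
    tendsto_of_tendsto_of_tendsto_of_le_of_le tendsto_const_nhds hD hg0 hgle
  -- Step 3: ‖un n‖ → ‖u‖
  have hnorm : Tendsto (fun n => ‖un n‖) atTop (nhds ‖u‖) := by
    rw [Metric.tendsto_atTop]
    intro ε hε
    obtain ⟨c, hc, hcp⟩ := aux_rpow_gap p ‖u‖ hp (norm_nonneg u) ε hε
    obtain ⟨N, hN⟩ := (Metric.tendsto_atTop.mp hgtend) c hc
    refine ⟨N, fun n hn => ?_⟩
    have := hN n hn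
    rw [Real.dist_eq, sub_zero] at this
    have hlt : g n < c := lt_of_le_of_lt (le_abs_self _) this
    have := hcp ‖un n‖ (norm_nonneg _) hlt
    rwa [Real.dist_eq]
  -- Step 4: strong convergence
  by_cases hu : u = 0
  · subst hu
    rw [tendsto_zero_iff_norm_tendsto_zero]
    simpa using hnorm
  · have hb : 0 < ‖u‖ := norm_pos_iff.mpr hu
    set x : W := ‖u‖⁻¹ • u with hx
    have hxnorm : ‖x‖ = 1 := by
      rw [hx, norm_smul, norm_inv, norm_norm, inv_mul_cancel₀ hb.ne']
    obtain ⟨f, hf1, hfu⟩ := exists_dual_vector ℝ u hb.ne'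
    have hfu' : f u = ‖u‖ := by exact_mod_cast hfu
    set y : ℕ → W := fun n => ‖un n‖⁻¹ • un n with hy
    -- eventually ‖un n‖ > ‖u‖/2
    have hev : ∀ᶠ n in atTop, ‖u‖ / 2 < ‖un n‖ :=
      hnorm.eventually (eventually_gt_nhds (by linarith))
    -- f(x + y n) → 2
    have hfx : f x = 1 := by
      rw [hx, map_smul, hfu', smul_eq_mul, inv_mul_cancel₀ hb.ne']
    have hftend : Tendsto (fun n => f x + ‖un n‖⁻¹ * f (un n)) atTop (nhds 2) := by
      have h1 : Tendsto (fun n => ‖un n‖⁻¹) atTop (nhds ‖u‖⁻¹) :=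
        hnorm.inv₀ hb.ne'
      have h2 : Tendsto (fun n => ‖un n‖⁻¹ * f (un n)) atTop (nhds (‖u‖⁻¹ * f u)) :=
        h1.mul (hweak f)
      have heq : f x + ‖u‖⁻¹ * f u = 2 := by
        rw [hfx, hfu', inv_mul_cancel₀ hb.ne']; norm_num
      have h3 : Tendsto (fun n => f x + ‖un n‖⁻¹ * f (un n)) atTop
          (nhds (f x + ‖u‖⁻¹ * f u)) := (tendsto_const_nhds (x := f x)).add h2
      rwa [heq] at h3
    -- y n → x
    have hytend : Tendsto y atTop (nhds x) := by
      rw [Metric.tendsto_atTop]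
      intro ε hε
      obtain ⟨δ, hδ, hδp⟩ := hluc x hxnorm ε hε
      have hev2 : ∀ᶠ n in atTop, 2 - δ < f x + ‖un n‖⁻¹ * f (un n) :=
        hftend.eventually (eventually_gt_nhds (by linarith))
      obtain ⟨N, hN⟩ := ((hev.and hev2).exists_forall_of_atTop)
      refine ⟨N, fun n hn => ?_⟩
      obtain ⟨hn1, hn2⟩ := hN n hn
      have hnpos : 0 < ‖un n‖ := lt_of_le_of_lt (by positivity) hn1
      have hyn : ‖y n‖ = 1 := by
        rw [hy]; simp only
        rw [norm_smul, norm_inv, norm_norm, inv_mul_cancel₀ hnpos.ne']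
      have hfxy : f (x + y n) = f x + ‖un n‖⁻¹ * f (un n) := by
        rw [map_add]; simp [hy, map_smul, smul_eq_mul]
      have hle : f (x + y n) ≤ ‖x + y n‖ := by
        calc f (x + y n) ≤ |f (x + y n)| := le_abs_self _
        _ = ‖f (x + y n)‖ := rfl
        _ ≤ ‖f‖ * ‖x + y n‖ := f.le_opNorm _
        _ = ‖x + y n‖ := by rw [hf1, one_mul]
      have h2δ : 2 - δ < ‖x + y n‖ := by
        rw [hfxy] at hle; linarith
      have := hδp (y n) hyn h2δ
      rw [dist_eq_norm, ← norm_sub_rev]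
      exact this
    -- conclude
    have hfinal : Tendsto (fun n => ‖un n‖ • y n) atTop (nhds (‖u‖ • x)) :=
      hnorm.smul hytend
    have hux : ‖u‖ • x = u := by
      rw [hx, smul_inv_smul₀ hb.ne']
    rw [hux] at hfinal
    refine Tendsto.congr' ?_ hfinal
    filter_upwards [hev] with n hn
    have hnpos : 0 < ‖un n‖ := lt_of_le_of_lt (by positivity) hn
    show ‖un n‖ • y n = un n
    rw [hy]
    exact smul_inv_smul₀ hnpos.ne' _
end

section
/- Under conditions (B) and (V), with V⁺ nonzero on a positive measure set, the restriction of H(u) = (1/p)∫(|∇u|^p + b|u|^p)dx to the manifold M = {u : (1/p)∫V|u|^p dx = 1} satisfies the Palais–Smale condition: any sequence (u_n) ⊂ M with H(u_n) → c and (H|_M)'(u_n) → 0 has a subsequence converging in W to some u ∈ M. -/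
open Filter

/-- The restriction of `H(u) = (1/p)‖u‖^p` to `M = {I = 1}` satisfies the Palais–Smale
condition: if `I(u_n) = 1`, `H(u_n) → c` and `(H|_M)'(u_n) = H'(u_n) - μ_n I'(u_n) → 0`
(Lagrange form), then a subsequence of `(u_n)` converges in `W` to some `u ∈ M`.
The structural facts used are: reflexivity of `W` (bounded sequences have weakly convergent
subsequences), weak continuity of `I`, weak-to-strong continuity of `I'`, the `(S⁺)`-type
property of `H'`, and the `p`-homogeneity pairings. -/
theorem stmt_9 {W : Type*} [NormedAddCommGroup W] [NormedSpace ℝ W]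
    (p c : ℝ) (hp : 1 < p)
    (H I : W → ℝ) (H' I' : W → W →L[ℝ] ℝ)
    (hH : ∀ u, HasFDerivAt H (H' u) u) (hI : ∀ u, HasFDerivAt I (I' u) u)
    (hHnorm : ∀ u, H u = (1 / p) * ‖u‖ ^ p)
    (hHhom : ∀ u, H' u u = p * H u) (hIhom : ∀ u, I' u u = p * I u)
    (hrefl : ∀ v : ℕ → W, (∃ C, ∀ n, ‖v n‖ ≤ C) →
      ∃ (w : W) (φ : ℕ → ℕ), StrictMono φ ∧
        ∀ f : W →L[ℝ] ℝ, Tendsto (fun n => f (v (φ n))) atTop (nhds (f w)))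
    (hIw : ∀ (v : ℕ → W) (w : W),
      (∀ f : W →L[ℝ] ℝ, Tendsto (fun n => f (v n)) atTop (nhds (f w))) →
      Tendsto (fun n => I (v n)) atTop (nhds (I w)))
    (hI'w : ∀ (v : ℕ → W) (w : W),
      (∀ f : W →L[ℝ] ℝ, Tendsto (fun n => f (v n)) atTop (nhds (f w))) →
      Tendsto (fun n => ‖I' (v n) - I' w‖) atTop (nhds 0))
    (hS : ∀ (v : ℕ → W) (w : W),
      (∀ f : W →L[ℝ] ℝ, Tendsto (fun n => f (v n)) atTop (nhds (f w))) →
      Tendsto (fun n => (H' (v n)) (v n - w)) atTop (nhds 0) →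
      Tendsto v atTop (nhds w))
    (u : ℕ → W) (hM : ∀ n, I (u n) = 1)
    (hHc : Tendsto (fun n => H (u n)) atTop (nhds c))
    (μ : ℕ → ℝ)
    (hPS : Tendsto (fun n => ‖H' (u n) - μ n • I' (u n)‖) atTop (nhds 0)) :
    ∃ (w : W) (φ : ℕ → ℕ), StrictMono φ ∧ I w = 1 ∧
      Tendsto (fun n => u (φ n)) atTop (nhds w) := by

  have hp0 : (0:ℝ) < p := lt_trans one_pos hp
  obtain ⟨C₀, hC₀⟩ := hHc.bddAbove_range
  set C : ℝ := max 1 (p * C₀) with hCdef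
  have hC : ∀ n, ‖u n‖ ≤ C := by
    intro n
    have h1 : H (u n) ≤ C₀ := hC₀ ⟨n, rfl⟩
    have h2 : ‖u n‖ ^ p ≤ p * C₀ := by
      rw [hHnorm (u n)] at h1
      have := mul_le_mul_of_nonneg_left h1 hp0.le
      calc ‖u n‖ ^ p = p * (1 / p * ‖u n‖ ^ p) := by field_simp
        _ ≤ p * C₀ := this
    rcases le_or_gt ‖u n‖ 1 with h | h
    · exact h.trans (le_max_left _ _)
    · calc ‖u n‖ = ‖u n‖ ^ (1:ℝ) := (Real.rpow_one _).symm
        _ ≤ ‖u n‖ ^ p := Real.rpow_le_rpow_of_exponent_le h.le hp.le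
        _ ≤ p * C₀ := h2
        _ ≤ C := le_max_right _ _
  obtain ⟨w, φ, hφ, hweak⟩ := hrefl u ⟨C, hC⟩
  have hIw1 : I w = 1 := by
    have h1 := hIw (fun n => u (φ n)) w hweak
    have h2 : (fun n => I (u (φ n))) = fun _ => (1:ℝ) := funext fun n => hM _
    rw [h2] at h1
    exact tendsto_nhds_unique h1 tendsto_const_nhds
  set e : ℕ → ℝ := fun n => (H' (u n) - μ n • I' (u n)) (u n) with he
  have he0 : Tendsto e atTop (nhds 0) := by
    have hg : Tendsto (fun n => ‖H' (u n) - μ n • I' (u n)‖ * C) atTop (nhds 0) := by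
      simpa using hPS.mul_const C
    refine squeeze_zero_norm (fun n => ?_) hg
    calc ‖e n‖ ≤ ‖H' (u n) - μ n • I' (u n)‖ * ‖u n‖ :=
          (H' (u n) - μ n • I' (u n)).le_opNorm _
      _ ≤ _ := mul_le_mul_of_nonneg_left (hC n) (norm_nonneg _)
  have hμ : Tendsto μ atTop (nhds c) := by
    have heq : μ = fun n => H (u n) - e n / p := by
      funext n
      have hEn : e n = p * H (u n) - μ n * p := by
        simp only [he, ContinuousLinearMap.sub_apply, ContinuousLinearMap.smul_apply,
          hHhom, hIhom, hM n, smul_eq_mul]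
        ring
      rw [hEn]
      field_simp
      ring
    rw [heq]
    have := hHc.sub (he0.div_const p)
    simpa using this
  have hμφ : Tendsto (fun n => μ (φ n)) atTop (nhds c) := hμ.comp hφ.tendsto_atTop
  have hbd : ∀ n, ‖u (φ n) - w‖ ≤ C + ‖w‖ := fun n =>
    (norm_sub_le _ _).trans (add_le_add (hC _) le_rfl)
  have t1 : Tendsto (fun n => (H' (u (φ n)) - μ (φ n) • I' (u (φ n))) (u (φ n) - w))
      atTop (nhds 0) := by
    have hg : Tendsto (fun n => ‖H' (u (φ n)) - μ (φ n) • I' (u (φ n))‖ * (C + ‖w‖))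
        atTop (nhds 0) := by
      simpa using (hPS.comp hφ.tendsto_atTop).mul_const (C + ‖w‖)
    refine squeeze_zero_norm (fun n => ?_) hg
    exact ((H' (u (φ n)) - μ (φ n) • I' (u (φ n))).le_opNorm _).trans
      (mul_le_mul_of_nonneg_left (hbd n) (norm_nonneg _))
  have hI'0 := hI'w (fun n => u (φ n)) w hweak
  have t2 : Tendsto (fun n => (I' (u (φ n)) - I' w) (u (φ n) - w)) atTop (nhds 0) := by
    have hg : Tendsto (fun n => ‖I' (u (φ n)) - I' w‖ * (C + ‖w‖)) atTop (nhds 0) := by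
      simpa using hI'0.mul_const (C + ‖w‖)
    refine squeeze_zero_norm (fun n => ?_) hg
    exact ((I' (u (φ n)) - I' w).le_opNorm _).trans
      (mul_le_mul_of_nonneg_left (hbd n) (norm_nonneg _))
  have t3 : Tendsto (fun n => I' w (u (φ n) - w)) atTop (nhds 0) := by
    have := (hweak (I' w)).sub_const (I' w w)
    simpa [map_sub] using this
  have key : Tendsto (fun n => H' (u (φ n)) (u (φ n) - w)) atTop (nhds 0) := by
    have heq : ∀ n, H' (u (φ n)) (u (φ n) - w) =
        (H' (u (φ n)) - μ (φ n) • I' (u (φ n))) (u (φ n) - w)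
        + μ (φ n) * ((I' (u (φ n)) - I' w) (u (φ n) - w))
        + μ (φ n) * (I' w (u (φ n) - w)) := by
      intro n
      simp only [ContinuousLinearMap.sub_apply, ContinuousLinearMap.smul_apply, smul_eq_mul]
      ring
    have h := (t1.add (hμφ.mul t2)).add (hμφ.mul t3)
    simp only [mul_zero, add_zero] at h
    exact h.congr fun n => (heq n).symm
  exact ⟨w, φ, hφ, hIw1, hS (fun n => u (φ n)) w hweak key⟩
end
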